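/- arXiv:2404.17541 — 3 statements merged into one kernel-verified Lean document; each statement's English description precedes it below -/
import Mathlib

section
/- For real numbers $v_i, v_j$ with $0 < v^l_i \le v_i \le v^u_i$ and $0 < v^l_j \le v_j \le v^u_j$, writing $v^\sigma_i = v^l_i + v^u_i$ and $v^\sigma_j = v^l_j + v^u_j$, the inequality $v^\sigma_i v^\sigma_j v_i v_j - v^u_j v^\sigma_j v_i^2 - v^u_i v^\sigma_i v_j^2 \ge v^u_i v^u_j (v^l_i v^l_j - v^u_i v^u_j)$ holds. -/
theorem stmt_5 (vi vj vil viu vjl vju : ℝ)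
    (h1 : 0 < vil) (h2 : vil ≤ vi) (h3 : vi ≤ viu)
    (h4 : 0 < vjl) (h5 : vjl ≤ vj) (h6 : vj ≤ vju)
    (vsi vsj : ℝ) (hsi : vsi = vil + viu) (hsj : vsj = vjl + vju) :
    vsi * vsj * vi * vj - vju * vsj * vi ^ 2 - viu * vsi * vj ^ 2 ≥
      viu * vju * (vil * vjl - viu * vju) := by
  subst hsi hsj
  nlinarith [mul_nonneg (mul_nonneg (by nlinarith : (0:ℝ) ≤ vju * (vjl + vju)) (sub_nonneg.2 h2)) (sub_nonneg.2 h3),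
    mul_nonneg (mul_nonneg (by nlinarith : (0:ℝ) ≤ viu * (vil + viu)) (sub_nonneg.2 h5)) (sub_nonneg.2 h6),
    mul_nonneg (mul_nonneg (by nlinarith : (0:ℝ) ≤ (vil + viu) * (vjl + vju)) (sub_nonneg.2 h3)) (sub_nonneg.2 h6)]
end

section
/- Let $v_i, v_j, \theta$ satisfy $0 < v^l_i \le v_i \le v^u_i$, $0 < v^l_j \le v_j \le v^u_j$, and $\theta^l \le \theta \le \theta^u$ with $\theta^u - \theta^l < \pi$. Set $w_i = v_i^2$, $w^R = v_i v_j \cos\theta$, $w^I = v_i v_j \sin\theta$, $\phi = (\theta^u+\theta^l)/2$, $\delta = (\theta^u-\theta^l)/2$, $v^\sigma_i = v^l_i + v^u_i$, $v^\sigma_j = v^l_j + v^u_j$. Then $v^\sigma_i v^\sigma_j (w^R\cos\phi + w^I\sin\phi) - v^u_j \cos(\delta)\, v^\sigma_j\, w_i - v^u_i \cos(\delta)\, v^\sigma_i\, \frac{(w^R)^2+(w^I)^2}{w_i} \ge v^u_i v^u_j \cos(\delta)\,(v^l_i v^l_j - v^u_i v^u_j)$. -/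
set_option maxHeartbeats 1000000

theorem stmt_7 (vi vj θ vil viu vjl vju θl θu : ℝ)
    (h1 : 0 < vil) (h2 : vil ≤ vi) (h3 : vi ≤ viu)
    (h4 : 0 < vjl) (h5 : vjl ≤ vj) (h6 : vj ≤ vju)
    (h7 : θl ≤ θ) (h8 : θ ≤ θu) (h9 : θu - θl < Real.pi)
    (wi wR wI φ δ vsi vsj : ℝ)
    (hwi : wi = vi ^ 2) (hR : wR = vi * vj * Real.cos θ) (hI : wI = vi * vj * Real.sin θ)
    (hφ : φ = (θu + θl) / 2) (hδ : δ = (θu - θl) / 2)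
    (hsi : vsi = vil + viu) (hsj : vsj = vjl + vju) :
    vsi * vsj * (wR * Real.cos φ + wI * Real.sin φ)
      - vju * Real.cos δ * vsj * wi
      - viu * Real.cos δ * vsi * ((wR ^ 2 + wI ^ 2) / wi)
    ≥ viu * vju * Real.cos δ * (vil * vjl - viu * vju) := by
  have hvi : 0 < vi := lt_of_lt_of_le h1 h2
  have hvj : 0 < vj := lt_of_lt_of_le h4 h5
  have hwine : wi ≠ 0 := by rw [hwi]; positivity
  -- simplify (wR^2 + wI^2)/wi = vj^2
  have hdiv : (wR ^ 2 + wI ^ 2) / wi = vj ^ 2 := by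
    have hsc : Real.sin θ ^ 2 + Real.cos θ ^ 2 = 1 := Real.sin_sq_add_cos_sq θ
    rw [hR, hI, hwi]
    field_simp
    nlinarith [hsc]
  -- wR cos φ + wI sin φ = vi vj cos (θ - φ)
  have hcomb : wR * Real.cos φ + wI * Real.sin φ = vi * vj * Real.cos (θ - φ) := by
    rw [hR, hI, Real.cos_sub]; ring
  -- δ bounds
  have hδ0 : 0 ≤ δ := by rw [hδ]; linarith
  have hδπ : δ ≤ Real.pi := by
    rw [hδ]; nlinarith [Real.pi_pos]
  -- cos (θ - φ) ≥ cos δ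
  have habs : |θ - φ| ≤ δ := by
    rw [abs_le]; constructor <;> [skip; skip] <;> rw [hφ, hδ] <;> linarith
  have hcosge : Real.cos δ ≤ Real.cos (θ - φ) := by
    have := Real.cos_le_cos_of_nonneg_of_le_pi (abs_nonneg (θ - φ)) hδπ habs
    rwa [Real.cos_abs] at this
  -- cos δ > 0
  have hcospos : 0 < Real.cos δ := by
    apply Real.cos_pos_of_mem_Ioo
    constructor
    · linarith [Real.pi_pos, hδ0]
    · rw [hδ]; linarith
  rw [hdiv, hcomb]
  have hkey : 0 ≤ (vil + viu) * (vjl + vju) * (vi * vj) - vju * (vjl + vju) * vi ^ 2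
      - viu * (vil + viu) * vj ^ 2 - viu * vju * vil * vjl + viu ^ 2 * vju ^ 2 := by
    have e : (vil + viu) * (vjl + vju) * (vi * vj) - vju * (vjl + vju) * vi ^ 2
        - viu * (vil + viu) * vj ^ 2 - viu * vju * vil * vjl + viu ^ 2 * vju ^ 2
        = vju * (vjl + vju) * ((vi - vil) * (viu - vi))
          + (vil + viu) * (vju - vj) * (viu * (vj - vjl))
          + (vil + viu) * (vju - vj) * ((viu - vi) * (vju + vjl)) := by ring
    rw [e]
    have t1 : 0 ≤ vju * (vjl + vju) * ((vi - vil) * (viu - vi)) :=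
      mul_nonneg (mul_nonneg (by linarith) (by linarith))
        (mul_nonneg (by linarith) (by linarith))
    have t2 : 0 ≤ (vil + viu) * (vju - vj) * (viu * (vj - vjl)) :=
      mul_nonneg (mul_nonneg (by linarith) (by linarith))
        (mul_nonneg (by linarith) (by linarith))
    have t3 : 0 ≤ (vil + viu) * (vju - vj) * ((viu - vi) * (vju + vjl)) :=
      mul_nonneg (mul_nonneg (by linarith) (by linarith))
        (mul_nonneg (by linarith) (by linarith))
    linarith
  have hprod : 0 ≤ vsi * vsj * (vi * vj) := by
    rw [hsi, hsj]
    exact mul_nonneg (mul_nonneg (by linarith) (by linarith)) (by positivity)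
  have hA : vsi * vsj * (vi * vj) * Real.cos δ ≤ vsi * vsj * (vi * vj * Real.cos (θ - φ)) := by
    have := mul_le_mul_of_nonneg_left hcosge hprod
    linarith [this]
  have hB : 0 ≤ Real.cos δ * ((vil + viu) * (vjl + vju) * (vi * vj) - vju * (vjl + vju) * vi ^ 2
      - viu * (vil + viu) * vj ^ 2 - viu * vju * vil * vjl + viu ^ 2 * vju ^ 2) :=
    mul_nonneg hcospos.le hkey
  subst hsi hsj hwi
  linarith [hA, hB]
end

section
/- Let $v_i, v_j, \theta$ satisfy $0 < v^l_i \le v_i \le v^u_i$, $0 < v^l_j \le v_j \le v^u_j$, and $\theta^l \le \theta \le \theta^u$ with $\theta^u - \theta^l < \pi$. Set $w_i = v_i^2$, $w^R = v_i v_j \cos\theta$, $w^I = v_i v_j \sin\theta$, $\phi = (\theta^u+\theta^l)/2$, $\delta = (\theta^u-\theta^l)/2$, $v^\sigma_i = v^l_i + v^u_i$, $v^\sigma_j = v^l_j + v^u_j$. Then $v^\sigma_i v^\sigma_j (w^R\cos\phi + w^I\sin\phi) - v^l_j \cos(\delta)\, v^\sigma_j\, w_i - v^l_i \cos(\delta)\,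 v^\sigma_i\, \frac{(w^R)^2+(w^I)^2}{w_i} \ge v^l_i v^l_j \cos(\delta)\,(v^u_i v^u_j - v^l_i v^l_j)$. -/
theorem stmt_8 (vi vj θ vil viu vjl vju θl θu : ℝ)
    (h1 : 0 < vil) (h2 : vil ≤ vi) (h3 : vi ≤ viu)
    (h4 : 0 < vjl) (h5 : vjl ≤ vj) (h6 : vj ≤ vju)
    (h7 : θl ≤ θ) (h8 : θ ≤ θu) (h9 : θu - θl < Real.pi)
    (wi wR wI φ δ vsi vsj : ℝ)
    (hwi : wi = vi ^ 2) (hR : wR = vi * vj * Real.cos θ) (hI : wI = vi * vj * Real.sin θ)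
    (hφ : φ = (θu + θl) / 2) (hδ : δ = (θu - θl) / 2)
    (hsi : vsi = vil + viu) (hsj : vsj = vjl + vju) :
    vsi * vsj * (wR * Real.cos φ + wI * Real.sin φ)
      - vjl * Real.cos δ * vsj * wi
      - vil * Real.cos δ * vsi * ((wR ^ 2 + wI ^ 2) / wi)
    ≥ vil * vjl * Real.cos δ * (viu * vju - vil * vjl) := by
  have hvi : 0 < vi := lt_of_lt_of_le h1 h2
  have hvj : 0 < vj := lt_of_lt_of_le h4 h5
  have hδ0 : 0 ≤ δ := by rw [hδ]; linarith
  have hδpi2 : δ < Real.pi / 2 := by rw [hδ]; linarith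
  have hcosδpos : 0 < Real.cos δ := by
    apply Real.cos_pos_of_mem_Ioo
    constructor <;> [linarith [Real.pi_pos]; exact hδpi2]
  have habs : |θ - φ| ≤ δ := by
    rw [abs_le]; constructor <;> (rw [hφ, hδ]; by_contra h; push_neg at h; linarith)
  have hcos : Real.cos δ ≤ Real.cos (θ - φ) := by
    rw [← Real.cos_abs (θ - φ)]
    exact Real.cos_le_cos_of_nonneg_of_le_pi (abs_nonneg _)
      (by linarith [Real.pi_pos]) habs
  have key : wR * Real.cos φ + wI * Real.sin φ = vi * vj * Real.cos (θ - φ) := by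
    rw [hR, hI, Real.cos_sub]; ring
  have hquot : (wR ^ 2 + wI ^ 2) / wi = vj ^ 2 := by
    rw [hR, hI, hwi]
    have hs := Real.sin_sq_add_cos_sq θ
    field_simp
    nlinarith [hs]
  rw [key, hquot, hwi]
  have p1 : 0 ≤ vjl * (vjl + vju) * ((vi - vil) * (viu - vi)) :=
    mul_nonneg (mul_nonneg h4.le (by linarith)) (mul_nonneg (by linarith) (by linarith))
  have p2 : 0 ≤ vil * (vil + viu) * ((vj - vjl) * (vju - vj)) :=
    mul_nonneg (mul_nonneg h1.le (by linarith)) (mul_nonneg (by linarith) (by linarith))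
  have p3 : 0 ≤ (vil + viu) * (vjl + vju) * ((vi - vil) * (vj - vjl)) :=
    mul_nonneg (mul_nonneg (by linarith) (by linarith)) (mul_nonneg (by linarith) (by linarith))
  have hf : vsi * vsj * (vi * vj) - vjl * vsj * vi ^ 2 - vil * vsi * vj ^ 2
      ≥ vil * vjl * (viu * vju - vil * vjl) := by
    rw [hsi, hsj]; linarith [p1, p2, p3]
  have hposprod : 0 < vsi * vsj * (vi * vj) := by
    rw [hsi, hsj]
    exact mul_pos (mul_pos (by linarith) (by linarith)) (mul_pos hvi hvj)
  have q1 := mul_le_mul_of_nonneg_left hcos hposprod.le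
  have q2 := mul_le_mul_of_nonneg_left hf hcosδpos.le
  linarith [q1, q2]
end
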